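/- Fix 0 < p < 1 and ε > 0. There exists a constant B = B(p, ε) > 0 such that for every sequence t(n) of positive integers with t(n) ≥ B·ln n for all large n, asymptotically almost surely χ^{t(n)}(G(n,p)) ≥ (1 − ε)·n·p/t(n). -/

import Mathlib

open MeasureTheory Filter
open scoped ENNReal NNReal

/-- The Bernoulli(p) measure on `Bool`. -/
noncomputable def bernoulliBool (p : ℝ) : Measure Bool :=
  p.toNNReal • Measure.dirac true + (1 - p).toNNReal • Measure.dirac false

instance (p : ℝ) : IsFiniteMeasure (bernoulliBool p) := by
  unfold bernoulliBool; infer_instance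

instance (n : ℕ) : MeasurableSpace (SimpleGraph (Fin n)) := ⊤

/-- The Erdős–Rényi random graph `G(n,p)`: the distribution of the simple graph on `Fin n`
obtained by including each possible edge independently with probability `p`. -/
noncomputable def erMeasure (n : ℕ) (p : ℝ) : Measure (SimpleGraph (Fin n)) :=
  Measure.map (fun f : Sym2 (Fin n) → Bool => SimpleGraph.fromEdgeSet {e | f e = true})
    (Measure.pi fun _ : Sym2 (Fin n) => bernoulliBool p)

/-- A set `S` of vertices is `t`-dependent if the induced subgraph has maximum degree at most `t`,
i.e. every vertex of `S` has at most `t` neighbours inside `S`. -/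
def IsTDependent {V : Type*} (G : SimpleGraph V) (t : ℕ) (S : Set V) : Prop :=
  ∀ v ∈ S, {u ∈ S | G.Adj v u}.ncard ≤ t

/-- The `t`-improper chromatic number: the least number of colours in a vertex colouring
in which every colour class is `t`-dependent. -/
noncomputable def improperChromaticNumber {V : Type*} (G : SimpleGraph V) (t : ℕ) : ℕ :=
  sInf {k | ∃ c : V → Fin k, ∀ i : Fin k, IsTDependent G t {v | c v = i}}

/-- The `t`-dependence number: the maximum size of a `t`-dependent set. -/
noncomputable def tDependenceNumber {V : Type*} (G : SimpleGraph V) (t : ℕ) : ℕ :=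
  sSup {m | ∃ S : Set V, S.ncard = m ∧ IsTDependent G t S}

/-- The Fenchel–Legendre transform `Λ*(x) = x ln(x/p) + (1-x) ln((1-x)/(1-p))`
(with the conventions `Λ*(0) = ln(1/(1-p))`, `Λ*(1) = ln(1/p)`, which hold automatically
since `Real.log 0 = 0` in Lean). -/
noncomputable def LambdaStar (p x : ℝ) : ℝ :=
  x * Real.log (x / p) + (1 - x) * Real.log ((1 - x) / (1 - p))

/-! ### Auxiliary material for the proof -/

section Aux

open Finset

/-- The weight of an edge-indicator function under the product Bernoulli measure. -/
noncomputable def Wt (p : ℝ) {n : ℕ} (f : Sym2 (Fin n) → Bool) : ℝ :=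
  ∏ e : Sym2 (Fin n), (if f e then p else 1 - p)

lemma Wt_nonneg {p : ℝ} (h0 : 0 ≤ p) (h1 : p ≤ 1) {n : ℕ} (f : Sym2 (Fin n) → Bool) :
    0 ≤ Wt p f :=
  Finset.prod_nonneg fun e _ => by by_cases hfe : f e <;> simp [hfe] <;> linarith

lemma bern_singleton {p : ℝ} (h0 : 0 ≤ p) (h1 : p ≤ 1) (b : Bool) :
    bernoulliBool p {b} = ENNReal.ofReal (if b then p else 1 - p) := by
  cases b <;>
    simp [bernoulliBool, Measure.dirac_apply', ENNReal.ofReal, Set.indicator,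
      smul_eq_mul]

lemma bern_univ {p : ℝ} (h0 : 0 ≤ p) (h1 : p ≤ 1) : bernoulliBool p Set.univ = 1 := by
  simp [bernoulliBool, smul_eq_mul]
  rw [← ENNReal.ofReal, ← ENNReal.ofReal, ← ENNReal.ofReal_add h0 (by linarith)]
  norm_num

lemma bern_prob {p : ℝ} (h0 : 0 ≤ p) (h1 : p ≤ 1) : IsProbabilityMeasure (bernoulliBool p) :=
  ⟨bern_univ h0 h1⟩

lemma er_apply {n : ℕ} {p : ℝ} (E : Set (SimpleGraph (Fin n))) :
    erMeasure n p E = (Measure.pi fun _ : Sym2 (Fin n) => bernoulliBool p)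
      ((fun f : Sym2 (Fin n) → Bool => SimpleGraph.fromEdgeSet {e | f e = true}) ⁻¹' E) := by
  rw [erMeasure,
    Measure.map_apply (measurable_of_countable _) (MeasurableSpace.measurableSet_top)]

lemma er_prob {n : ℕ} {p : ℝ} (h0 : 0 ≤ p) (h1 : p ≤ 1) :
    IsProbabilityMeasure (erMeasure n p) := by
  haveI := bern_prob h0 h1
  constructor
  rw [er_apply, Set.preimage_univ]
  exact measure_univ

lemma pi_finset_apply {p : ℝ} (h0 : 0 ≤ p) (h1 : p ≤ 1) {n : ℕ}
    (F : Finset (Sym2 (Fin n) → Bool)) :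
    (Measure.pi fun _ : Sym2 (Fin n) => bernoulliBool p) ↑F
      = ENNReal.ofReal (∑ f ∈ F, Wt p f) := by
  have hsingle : ∀ f : Sym2 (Fin n) → Bool,
      (Measure.pi fun _ : Sym2 (Fin n) => bernoulliBool p) {f} = ENNReal.ofReal (Wt p f) := by
    intro f
    rw [← Set.univ_pi_singleton f, Measure.pi_pi]
    rw [Wt, ENNReal.ofReal_prod_of_nonneg
      (fun e _ => by by_cases hfe : f e <;> simp [hfe] <;> linarith)]
    exact Finset.prod_congr rfl fun e _ => bern_singleton h0 h1 (f e)
  have : (↑F : Set (Sym2 (Fin n) → Bool)) = ⋃ f ∈ F, {f} := by ext g; simp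
  rw [this, measure_biUnion_finset ?_ (fun f _ => measurableSet_singleton f)]
  · rw [ENNReal.ofReal_sum_of_nonneg (fun f _ => Wt_nonneg h0 h1 f)]
    exact Finset.sum_congr rfl fun f _ => hsingle f
  · intro a _ b _ hab
    simp [Function.onFun, Set.disjoint_singleton, hab]

/-- Chernoff-type bound for the lower tail of the number of present edges. -/
lemma chernoff {p : ℝ} (h0 : 0 ≤ p) (h1 : p ≤ 1) {n : ℕ} (ES : Finset (Sym2 (Fin n)))
    (F : Finset (Sym2 (Fin n) → Bool)) (a l : ℝ) (hl : 0 ≤ l)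
    (hF : ∀ f ∈ F, (((ES.filter fun e => f e = true)).card : ℝ) ≤ a) :
    ∑ f ∈ F, Wt p f ≤ Real.exp (l * a) * (p * Real.exp (-l) + (1 - p)) ^ ES.card := by
  set X : (Sym2 (Fin n) → Bool) → ℕ := fun f => ((ES.filter fun e => f e = true)).card with hX
  set g : Sym2 (Fin n) → Bool → ℝ :=
    fun e b => (if b then p else 1 - p) * (if e ∈ ES then (if b then Real.exp (-l) else 1) else 1)
    with hg
  have key : ∀ f : Sym2 (Fin n) → Bool,
      Wt p f * Real.exp (l * ((a : ℝ) - X f)) = Real.exp (l * a) * ∏ e, g e (f e) := by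
    intro f
    have hexp : Real.exp (-(l * (X f : ℝ)))
        = ∏ e : Sym2 (Fin n),
            (if e ∈ ES then (if f e = true then Real.exp (-l) else 1) else 1) := by
      have hXsum : (X f : ℝ) = ∑ e ∈ ES, (if f e = true then (1:ℝ) else 0) := by
        rw [hX]; push_cast [Finset.card_filter]
        exact Finset.sum_congr rfl fun e _ => by by_cases hfe : f e <;> simp [hfe]
      calc Real.exp (-(l * (X f:ℝ)))
          = Real.exp (∑ e ∈ ES, if f e = true then -l else 0) := by
            rw [hXsum, Finset.mul_sum, ← Finset.sum_neg_distrib]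
            congr 1
            exact Finset.sum_congr rfl fun e _ => by by_cases hfe : f e <;> simp [hfe]
        _ = ∏ e ∈ ES, Real.exp (if f e = true then -l else 0) := Real.exp_sum _ _
        _ = ∏ e ∈ ES, (if e ∈ ES then (if f e = true then Real.exp (-l) else 1) else 1) := by
            refine Finset.prod_congr rfl fun e he => ?_
            simp only [he, if_true]
            by_cases hfe : f e <;> simp [hfe]
        _ = ∏ e : Sym2 (Fin n),
              (if e ∈ ES then (if f e = true then Real.exp (-l) else 1) else 1) :=
            Finset.prod_subset (Finset.subset_univ _) (fun e _ hne => by simp [hne])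
    have harg : l * ((a:ℝ) - X f) = l * a + -(l * (X f : ℝ)) := by ring
    rw [harg, Real.exp_add, hexp, hg, Wt, mul_left_comm]
    congr 1
    rw [← Finset.prod_mul_distrib]
  calc ∑ f ∈ F, Wt p f
      ≤ ∑ f ∈ F, Wt p f * Real.exp (l * ((a:ℝ) - X f)) := by
        refine Finset.sum_le_sum fun f hf => ?_
        have h1e : 1 ≤ Real.exp (l * ((a:ℝ) - X f)) := by
          apply Real.one_le_exp
          have : (0:ℝ) ≤ (a:ℝ) - X f := by rw [hX]; linarith [hF f hf]
          positivity
        nlinarith [Wt_nonneg h0 h1 f]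
    _ ≤ ∑ f : Sym2 (Fin n) → Bool, Wt p f * Real.exp (l * ((a:ℝ) - X f)) := by
        refine Finset.sum_le_sum_of_subset_of_nonneg (Finset.subset_univ F) fun f _ _ => ?_
        have := Wt_nonneg h0 h1 f
        positivity
    _ = Real.exp (l * a) * ∑ f : Sym2 (Fin n) → Bool, ∏ e, g e (f e) := by
        rw [Finset.mul_sum]; exact Finset.sum_congr rfl fun f _ => key f
    _ = Real.exp (l * a) * ∏ e : Sym2 (Fin n), (∑ b : Bool, g e b) := by
        congr 1
        rw [Finset.prod_univ_sum]
        rw [Fintype.piFinset_univ]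
    _ = Real.exp (l * a) * ∏ e : Sym2 (Fin n),
          (if e ∈ ES then p * Real.exp (-l) + (1 - p) else 1) := by
        congr 1
        refine Finset.prod_congr rfl fun e _ => ?_
        rw [Fintype.sum_bool, hg]
        by_cases he : e ∈ ES <;> simp [he] <;> ring
    _ = Real.exp (l * a) * (p * Real.exp (-l) + (1 - p)) ^ ES.card := by
        congr 1
        rw [← Finset.prod_subset (Finset.subset_univ ES) (fun e _ hne => by simp [hne]),
          Finset.prod_congr rfl (fun e (he : e ∈ ES) => if_pos he), Finset.prod_const]

/-- Uncurried `Sym2.mk`. -/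
abbrev sym2mk {α : Type*} (q : α × α) : Sym2 α := Sym2.mk q.1 q.2

lemma sym2_fiber {n : ℕ} (S : Finset (Fin n)) :
    ∀ e ∈ S.offDiag.image sym2mk,
      (S.offDiag.filter fun q => sym2mk q = e).card = 2 := by
  intro e he
  obtain ⟨q, hq, rfl⟩ := Finset.mem_image.1 he
  have hqne : q.1 ≠ q.2 := (Finset.mem_offDiag.1 hq).2.2
  have : (S.offDiag.filter fun r => sym2mk r = sym2mk q) = {q, q.swap} := by
    ext r
    simp only [Finset.mem_filter, Finset.mem_insert, Finset.mem_singleton, sym2mk, Sym2.mk_eq_mk_iff]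
    constructor
    · rintro ⟨-, hr⟩; exact hr
    · rintro (rfl | rfl)
      · exact ⟨hq, Or.inl rfl⟩
      · refine ⟨?_, Or.inr rfl⟩
        rw [Finset.mem_offDiag] at hq ⊢
        exact ⟨hq.2.1, hq.1, fun hh => hqne hh.symm⟩
  rw [this, Finset.card_insert_of_notMem, Finset.card_singleton]
  simp only [Finset.mem_singleton]
  intro hq2
  have := congrArg Prod.fst hq2
  simp at this
  exact hqne this

lemma handshake {n m : ℕ} (f : Sym2 (Fin n) → Bool) (S : Finset (Fin n))
    (h : IsTDependent (SimpleGraph.fromEdgeSet {e | f e = true}) m ↑S) :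
    2 * ((S.offDiag.image sym2mk).filter (fun e => f e = true)).card ≤ S.card * m := by
  classical
  set G := SimpleGraph.fromEdgeSet {e : Sym2 (Fin n) | f e = true} with hG
  have hdeg : ∀ v ∈ S, (S.filter fun u => G.Adj v u).card ≤ m := by
    intro v hv
    have := h v (by exact_mod_cast hv)
    have hset : {u ∈ (↑S : Set (Fin n)) | G.Adj v u} = ↑(S.filter fun u => G.Adj v u) := by
      ext u; simp
    rwa [hset, Set.ncard_coe_finset] at this
  have hsum : ∑ q ∈ S.offDiag, (if f (sym2mk q) = true then 1 else 0) ≤ S.card * m := by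
    calc ∑ q ∈ S.offDiag, (if f (sym2mk q) = true then 1 else 0)
        = ∑ q ∈ S.offDiag, (if G.Adj q.1 q.2 then 1 else 0) := by
          refine Finset.sum_congr rfl fun q hq => ?_
          rw [Finset.mem_offDiag] at hq
          have hiff : G.Adj q.1 q.2 ↔ f (sym2mk q) = true := by
            rw [hG, SimpleGraph.fromEdgeSet_adj]
            simp [hq.2.2]
          simp only [hiff]
        _ ≤ ∑ q ∈ S ×ˢ S, (if G.Adj q.1 q.2 then 1 else 0) := by
          refine Finset.sum_le_sum_of_subset ?_
          intro q hq
          rw [Finset.mem_offDiag] at hq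
          exact Finset.mem_product.2 ⟨hq.1, hq.2.1⟩
        _ = ∑ v ∈ S, (S.filter fun u => G.Adj v u).card := by
          rw [Finset.sum_product]
          exact Finset.sum_congr rfl fun v _ => by rw [Finset.card_filter]
        _ ≤ ∑ _v ∈ S, m := Finset.sum_le_sum fun v hv => hdeg v hv
        _ = S.card * m := by rw [Finset.sum_const, smul_eq_mul]
  have hregroup : ∑ q ∈ S.offDiag, (if f (sym2mk q) = true then 1 else 0)
      = 2 * ((S.offDiag.image sym2mk).filter (fun e => f e = true)).card := by
    rw [Finset.sum_comp (fun e => if f e = true then (1:ℕ) else 0) sym2mk]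
    calc ∑ b ∈ S.offDiag.image sym2mk,
          (S.offDiag.filter fun q => sym2mk q = b).card • (if f b = true then (1:ℕ) else 0)
        = ∑ b ∈ S.offDiag.image sym2mk, 2 * (if f b = true then (1:ℕ) else 0) :=
          Finset.sum_congr rfl fun b hb => by rw [sym2_fiber S b hb, smul_eq_mul]
      _ = 2 * ∑ b ∈ S.offDiag.image sym2mk, (if f b = true then (1:ℕ) else 0) :=
          (Finset.mul_sum _ _ _).symm
      _ = 2 * ((S.offDiag.image sym2mk).filter (fun e => f e = true)).card := by
          rw [Finset.card_filter]
  omega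

lemma tdep_mono {V : Type*} {G : SimpleGraph V} {m : ℕ} {S T : Set V} [Finite V]
    (hST : T ⊆ S) (h : IsTDependent G m S) : IsTDependent G m T := by
  intro v hv
  refine le_trans (Set.ncard_le_ncard ?_ (Set.toFinite _)) (h v (hST hv))
  intro u hu
  exact ⟨hST hu.1, hu.2⟩

lemma det_bound {n m s : ℕ} (hs : 1 ≤ s) (G : SimpleGraph (Fin n))
    (h : ∀ T : Set (Fin n), T.ncard = s → ¬ IsTDependent G m T) :
    n ≤ improperChromaticNumber G m * (s - 1) := by
  classical
  set k := improperChromaticNumber G m with hk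
  have hne : {k' | ∃ c : Fin n → Fin k',
      ∀ i : Fin k', IsTDependent G m {v | c v = i}}.Nonempty := by
    refine ⟨n, id, fun i v hv => ?_⟩
    have hvi : v = i := hv
    have hempty : {u ∈ {w | id w = i} | G.Adj v u} = ∅ := by
      ext u
      simp only [Set.mem_setOf_eq, Set.mem_empty_iff_false, iff_false, not_and, id]
      rintro rfl
      rw [hvi]
      exact fun had => G.irrefl had
    rw [hempty]
    simp
  obtain ⟨c, hc⟩ := Nat.sInf_mem hne
  have hclass : ∀ i : Fin k, (univ.filter fun v => c v = i).card ≤ s - 1 := by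
    intro i
    by_contra hlt
    push_neg at hlt
    have hsle : s ≤ {v | c v = i}.ncard := by
      have : ↑(univ.filter fun v => c v = i) = {v | c v = i} := by ext u; simp
      rw [← this, Set.ncard_coe_finset]
      omega
    obtain ⟨T, hTsub, hTcard⟩ := Set.exists_subset_card_eq hsle
    exact h T hTcard (tdep_mono hTsub (hc i))
  calc n = (univ : Finset (Fin n)).card := by rw [Finset.card_univ, Fintype.card_fin]
    _ = ∑ i : Fin k, (univ.filter fun v => c v = i).card :=
        by exact (Finset.card_eq_sum_card_fiberwise fun v _ => Finset.mem_univ _).trans (Finset.sum_congr rfl fun i _ => by congr)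
    _ ≤ ∑ _i : Fin k, (s - 1) := Finset.sum_le_sum fun i _ => hclass i
    _ = k * (s - 1) := by
        rw [Finset.sum_const, smul_eq_mul, Finset.card_univ, Fintype.card_fin]

end Aux


section Main

open Finset

set_option maxHeartbeats 2000000 in
lemma key_lemma (p : ℝ) (hp0 : 0 < p) (hp1 : p < 1) (ε : ℝ) (hε : 0 < ε) (hε2 : ε ≤ 1/2) :
    ∃ B : ℝ, 0 < B ∧
      ∀ t : ℕ → ℕ, (∀ n, 0 < t n) → (∀ᶠ n : ℕ in atTop, B * Real.log n ≤ (t n : ℝ)) →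
        Tendsto (fun n => erMeasure n p
            {G | (1 - ε) * (n : ℝ) * p / (t n : ℝ) ≤ (improperChromaticNumber G (t n) : ℝ)})
          atTop (nhds 1) := by
  classical
  set eh : ℝ := 2 * ε / 3 with heh
  have heh0 : 0 < eh := by rw [heh]; positivity
  have heh3 : eh ≤ 1/3 := by rw [heh]; linarith
  have h1eh0 : 0 < 1 - eh := by linarith
  have h1eh1 : 1 - eh < 1 := by linarith
  set l : ℝ := -Real.log (1 - eh) with hl
  have hl0 : 0 < l := by
    rw [hl, neg_pos]
    exact Real.log_neg h1eh0 h1eh1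
  set c : ℝ := eh - l * (1 - eh) with hc
  have hc0 : 0 < c := by
    have hne : (1 - eh)⁻¹ ≠ 1 := by
      intro hcon
      have : 1 - eh = 1 := by
        field_simp at hcon
        linarith
      linarith
    have hlt : Real.log (1 - eh)⁻¹ < (1 - eh)⁻¹ - 1 :=
      Real.log_lt_sub_one_of_pos (by positivity) hne
    rw [Real.log_inv] at hlt
    have h2 : l * (1 - eh) < eh := by
      have h3 : l < (1 - eh)⁻¹ - 1 := by rw [hl]; exact hlt
      have h4 : ((1 - eh)⁻¹ - 1) * (1 - eh) = eh := by field_simp; ring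
      nlinarith
    rw [hc]; linarith
  set B : ℝ := 5 / c + 3 / ε with hB
  have hB0 : 0 < B := by rw [hB]; positivity
  refine ⟨B, hB0, ?_⟩
  intro t ht hBt
  haveI hprob : ∀ n, IsProbabilityMeasure (erMeasure n p) := fun n => er_prob hp0.le hp1.le
  set E : (n : ℕ) → Set (SimpleGraph (Fin n)) := fun n =>
    {G | (1 - ε) * (n : ℝ) * p / (t n : ℝ) ≤ (improperChromaticNumber G (t n) : ℝ)} with hE
  have hbound : ∀ᶠ n : ℕ in atTop, erMeasure n p (E n)ᶜ ≤ ENNReal.ofReal ((n:ℝ)⁻¹) := by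
    filter_upwards [hBt, eventually_ge_atTop 3] with n hBm hn3
    set m := t n with hm
    have hm0 : 0 < m := ht n
    have hmR0 : (0:ℝ) < m := by exact_mod_cast hm0
    have hn0 : (0:ℝ) < n := by
      have : (3:ℝ) ≤ n := by exact_mod_cast hn3
      linarith
    have hlog1 : 1 ≤ Real.log n := by
      rw [Real.le_log_iff_exp_le hn0]
      have h3 : (3:ℝ) ≤ n := by exact_mod_cast hn3
      have := Real.exp_one_lt_d9
      linarith
    have hlog0 : 0 ≤ Real.log n := by linarith
    have hmB : B ≤ (m:ℝ) := by
      calc B = B * 1 := (mul_one B).symm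
        _ ≤ B * Real.log n := by
            exact mul_le_mul_of_nonneg_left hlog1 hB0.le
        _ ≤ m := hBm
    have hmε : (3:ℝ)/ε ≤ m := by
      have h35 : (3:ℝ)/ε ≤ B := by
        rw [hB]
        have h5c : 0 < 5 / c := by positivity
        linarith
      exact le_trans h35 hmB
    have hm5c : 5 / c * Real.log n ≤ (m:ℝ) := by
      have h1 : 5/c ≤ B := by
        rw [hB]
        have : 0 < 3 / ε := by positivity
        linarith
      calc 5/c * Real.log n ≤ B * Real.log n := mul_le_mul_of_nonneg_right h1 hlog0
        _ ≤ m := hBm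
    set x : ℝ := (m:ℝ) / ((1 - eh) * p) with hx
    have hx0 : 0 < x := by rw [hx]; positivity
    set s : ℕ := ⌈x⌉₊ + 1 with hs
    have hs1 : 1 ≤ s := by omega
    have hs1R : (1:ℝ) ≤ s := by exact_mod_cast hs1
    have hslow : x ≤ (s:ℝ) - 1 := by
      rw [hs]; push_cast; linarith [Nat.le_ceil x]
    have hshigh : (s:ℝ) - 1 ≤ x + 1 := by
      rw [hs]; push_cast; linarith [Nat.ceil_lt_add_one hx0.le]
    have hsm1 : (0:ℝ) ≤ (s:ℝ) - 1 := le_trans hx0.le hslow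
    have hsdet : (s:ℝ) - 1 ≤ (m:ℝ) / ((1 - ε) * p) := by
      have hd1 : (0:ℝ) < (1 - ε) * p := mul_pos (by linarith) hp0
      have hm_eq : (m:ℝ) = (1 - eh) * (p * x) := by
        rw [hx]; field_simp
      have h2 : (3:ℝ) ≤ ε * m := by
        rw [div_le_iff₀ hε] at hmε
        linarith
      have hpx0 : (0:ℝ) ≤ p * x := by positivity
      have hpx1 : 1 ≤ (ε/3) * (p * x) := by
        have h3 : 3 ≤ ε * ((1 - eh) * (p * x)) := by rw [← hm_eq]; exact h2
        have h4 : 0 ≤ ε * eh * (p * x) :=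
          mul_nonneg (mul_nonneg hε.le heh0.le) hpx0
        linarith [h3, h4]
      have hkey : (1 - ε) * p * (x + 1) ≤ (m:ℝ) := by
        have hp_le1 : (1 - ε) * p ≤ 1 := by
          have := mul_le_mul (by linarith : (1 - ε) ≤ 1) hp1.le hp0.le
            (by norm_num : (0:ℝ) ≤ 1)
          linarith
        have hexpand : (1 - ε) * p * (x + 1) = (1 - ε) * (p * x) + (1 - ε) * p := by ring
        have heh_eq : (1 - eh) * (p * x) = (1 - ε) * (p * x) + (ε/3) * (p * x) := by
          rw [heh]; ring
        rw [hm_eq, hexpand, heh_eq]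
        linarith
      rw [le_div_iff₀ hd1]
      have hstep : ((s:ℝ) - 1) * ((1 - ε) * p) ≤ (x + 1) * ((1 - ε) * p) :=
        mul_le_mul_of_nonneg_right hshigh hd1.le
      calc ((s:ℝ) - 1) * ((1 - ε) * p) ≤ (x + 1) * ((1 - ε) * p) := hstep
        _ = (1 - ε) * p * (x + 1) := by ring
        _ ≤ m := hkey
    clear_value s
    -- Bad event
    set A : Finset (Fin n) → Finset (Sym2 (Fin n) → Bool) := fun S =>
      Finset.univ.filter (fun f =>
        2 * ((S.offDiag.image sym2mk).filter (fun e => f e = true)).card ≤ S.card * m) with hA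
    set Bad : Set (Sym2 (Fin n) → Bool) :=
      ⋃ S ∈ Finset.powersetCard s (Finset.univ : Finset (Fin n)), (↑(A S) : Set _) with hBad
    have hincl : (fun f : Sym2 (Fin n) → Bool => SimpleGraph.fromEdgeSet {e | f e = true}) ⁻¹'
        (E n)ᶜ ⊆ Bad := by
      intro f hf
      by_contra hfB
      apply hf
      simp only [hE, Set.mem_preimage, Set.mem_compl_iff, Set.mem_setOf_eq, not_not]
      set G := SimpleGraph.fromEdgeSet {e : Sym2 (Fin n) | f e = true} with hG
      have hnoT : ∀ T : Set (Fin n), T.ncard = s → ¬ IsTDependent G m T := by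
        intro T hT hdep
        have hTfin : T.Finite := Set.toFinite T
        have hScard : hTfin.toFinset.card = s := by
          rw [← Set.ncard_eq_toFinset_card T hTfin, hT]
        have h2X := handshake f hTfin.toFinset (by rw [hTfin.coe_toFinset]; exact hdep)
        apply hfB
        rw [hBad]
        refine Set.mem_biUnion (Finset.mem_powersetCard.2
          ⟨Finset.subset_univ _, hScard⟩) ?_
        simp only [hA, Finset.coe_filter, Finset.mem_univ, true_and, Set.mem_setOf_eq]
        exact h2X
      have hnk := det_bound hs1 G hnoT
      set k := improperChromaticNumber G m with hkdef
      have hnkR : (n:ℝ) ≤ (k:ℝ) * ((s:ℝ) - 1) := by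
        have hcast : ((k * (s-1) : ℕ):ℝ) = (k:ℝ) * ((s:ℝ)-1) := by
          push_cast [Nat.cast_sub hs1]
          ring
        rw [← hcast]
        exact_mod_cast hnk
      have hk0 : (0:ℝ) ≤ k := Nat.cast_nonneg k
      have hd1 : (0:ℝ) < (1 - ε) * p := mul_pos (by linarith) hp0
      have h2 : (n:ℝ) ≤ (k:ℝ) * ((m:ℝ)/((1-ε)*p)) :=
        le_trans hnkR (mul_le_mul_of_nonneg_left hsdet hk0)
      rw [mul_div_assoc'] at h2
      rw [le_div_iff₀ hd1] at h2
      rw [div_le_iff₀ hmR0]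
      linarith
    -- measure bound for each A S
    set bnd2 : ℝ := Real.exp (l * ((s:ℝ) * m / 2) - p * eh * ((s:ℝ) * ((s:ℝ)-1) / 2)) with hbnd2
    have hA_bound : ∀ S ∈ Finset.powersetCard s (Finset.univ : Finset (Fin n)),
        (Measure.pi fun _ : Sym2 (Fin n) => bernoulliBool p) (↑(A S) : Set _)
          ≤ ENNReal.ofReal bnd2 := by
      intro S hS
      have hScard : S.card = s := (Finset.mem_powersetCard.1 hS).2
      set ES := S.offDiag.image sym2mk with hES
      set N := ES.card with hN
      have hFcond : ∀ f ∈ A S, (((ES.filter fun e => f e = true)).card : ℝ) ≤ (s:ℝ) * m / 2 := by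
        intro f hfA
        rw [hA, Finset.mem_filter] at hfA
        have h2X := hfA.2
        rw [hScard] at h2X
        have : (2 * ((ES.filter fun e => f e = true)).card : ℝ) ≤ ((s * m : ℕ) : ℝ) := by
          exact_mod_cast h2X
        push_cast at this
        linarith
      have hchern := chernoff hp0.le hp1.le ES (A S) ((s:ℝ) * m / 2) l hl0.le hFcond
      have hbase : p * Real.exp (-l) + (1 - p) = 1 - p * eh := by
        rw [hl, neg_neg, Real.exp_log h1eh0]; ring
      have hbase0 : (0:ℝ) ≤ 1 - p * eh := by
        have := mul_le_mul hp1.le heh3 heh0.le (by norm_num : (0:ℝ) ≤ 1)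
        linarith
      have hbase_le : 1 - p * eh ≤ Real.exp (-(p * eh)) := by
        have := Real.add_one_le_exp (-(p * eh))
        linarith
      have hNlow : (s:ℝ) * ((s:ℝ)-1) / 2 ≤ (N:ℝ) := by
        have hfib : S.offDiag.card ≤ 2 * N := by
          rw [hN, hES]
          exact Finset.card_le_mul_card_image S.offDiag 2
            (fun e he => le_of_eq (sym2_fiber S e he))
        have hod : S.offDiag.card = s * s - s := by
          rw [Finset.offDiag_card, hScard]
        have hss : s ≤ s * s := Nat.le_mul_of_pos_left s hs1
        have hcast : ((s * s - s : ℕ):ℝ) = (s:ℝ) * (s:ℝ) - s := by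
          push_cast [Nat.cast_sub hss]
          ring
        have : ((s * s - s : ℕ):ℝ) ≤ 2 * (N:ℝ) := by
          rw [← hod]
          exact_mod_cast hfib
        rw [hcast] at this
        linarith
      have hsum_le : ∑ f ∈ A S, Wt p f ≤ bnd2 := by
        refine le_trans hchern ?_
        rw [hbase]
        have hp1' : (1 - p*eh)^N ≤ Real.exp ((N:ℝ) * -(p * eh)) := by
          rw [Real.exp_nat_mul]
          exact pow_le_pow_left₀ hbase0 hbase_le N
        have hp2 : Real.exp ((N:ℝ) * -(p * eh)) ≤
            Real.exp (-(p * eh * ((s:ℝ) * ((s:ℝ)-1) / 2))) := by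
          apply Real.exp_le_exp.2
          have hpe : (0:ℝ) ≤ p * eh := by positivity
          have := mul_le_mul_of_nonneg_left hNlow hpe
          linarith
        calc Real.exp (l * ((s:ℝ) * m / 2)) * (1 - p*eh)^N
            ≤ Real.exp (l * ((s:ℝ) * m / 2)) *
              Real.exp (-(p * eh * ((s:ℝ) * ((s:ℝ)-1) / 2))) := by
              exact mul_le_mul_of_nonneg_left (le_trans hp1' hp2) (Real.exp_nonneg _)
          _ = bnd2 := by
              rw [hbnd2, ← Real.exp_add]
              ring_nf
      calc (Measure.pi fun _ : Sym2 (Fin n) => bernoulliBool p) (↑(A S) : Set _)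
          = ENNReal.ofReal (∑ f ∈ A S, Wt p f) := pi_finset_apply hp0.le hp1.le (A S)
        _ ≤ ENNReal.ofReal bnd2 := ENNReal.ofReal_le_ofReal hsum_le
    -- union bound and final numeric estimate
    have hBadle : (Measure.pi fun _ : Sym2 (Fin n) => bernoulliBool p) Bad
        ≤ ENNReal.ofReal ((n:ℝ)⁻¹) := by
      calc (Measure.pi fun _ : Sym2 (Fin n) => bernoulliBool p) Bad
          ≤ ∑ S ∈ Finset.powersetCard s (Finset.univ : Finset (Fin n)),
            (Measure.pi fun _ : Sym2 (Fin n) => bernoulliBool p) (↑(A S) : Set _) := by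
            rw [hBad]
            exact measure_biUnion_finset_le _ _
        _ ≤ ∑ S ∈ Finset.powersetCard s (Finset.univ : Finset (Fin n)),
            ENNReal.ofReal bnd2 := Finset.sum_le_sum hA_bound
        _ = (n.choose s : ℝ≥0∞) * ENNReal.ofReal bnd2 := by
            rw [Finset.sum_const, Finset.card_powersetCard, Finset.card_univ, Fintype.card_fin,
              nsmul_eq_mul]
        _ = ENNReal.ofReal ((n.choose s : ℝ) * bnd2) := by
            rw [ENNReal.ofReal_mul (Nat.cast_nonneg _), ENNReal.ofReal_natCast]
        _ ≤ ENNReal.ofReal ((n:ℝ)⁻¹) := by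
            apply ENNReal.ofReal_le_ofReal
            -- the main exponent computation
            have hchoose : ((n.choose s : ℕ):ℝ) ≤ (n:ℝ)^s := by
              exact_mod_cast Nat.choose_le_pow n s
            have hnpow : (n:ℝ)^s = Real.exp ((s:ℝ) * Real.log n) := by
              rw [Real.exp_nat_mul, Real.exp_log hn0]
            have hbnd2pos : 0 ≤ bnd2 := Real.exp_nonneg _
            have hstep : (n.choose s : ℝ) * bnd2 ≤
                Real.exp ((s:ℝ) * Real.log n + (l * ((s:ℝ) * m / 2)
                  - p * eh * ((s:ℝ) * ((s:ℝ)-1) / 2))) := by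
              rw [Real.exp_add, ← hbnd2, ← hnpow]
              exact mul_le_mul_of_nonneg_right hchoose hbnd2pos
            have hsm : (m:ℝ) ≤ (1 - eh) * p * ((s:ℝ)-1) := by
              have h2 := hslow
              rw [hx, div_le_iff₀ (by positivity : (0:ℝ) < (1-eh)*p)] at h2
              linarith [h2]
            have h51 : (m:ℝ) ≤ p * ((s:ℝ)-1) := by
              have h4 : 0 ≤ eh * p * ((s:ℝ)-1) :=
                mul_nonneg (mul_nonneg heh0.le hp0.le) hsm1
              linarith [hsm, h4]
            have hlog5 : 5 * Real.log n ≤ c * (p * ((s:ℝ)-1)) := by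
              have h1 : 5 * Real.log n ≤ c * m := by
                rw [div_mul_eq_mul_div, div_le_iff₀ hc0] at hm5c
                linarith
              have h4 := mul_le_mul_of_nonneg_left h51 hc0.le
              linarith
            have e1 : l * ((s:ℝ) * m / 2) ≤ (s:ℝ)/2 * (l * ((1-eh) * p * ((s:ℝ)-1))) := by
              have h4 := mul_le_mul_of_nonneg_left hsm hl0.le
              have h5 := mul_le_mul_of_nonneg_left h4
                (by positivity : (0:ℝ) ≤ (s:ℝ)/2)
              linarith [h5]
            have e2 : (s:ℝ)/2 * (l * ((1-eh) * p * ((s:ℝ)-1))) - p * eh * ((s:ℝ) * ((s:ℝ)-1) / 2)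
                = -((s:ℝ)/2 * (c * (p * ((s:ℝ)-1)))) := by
              rw [hc]; ring
            have e3 : (s:ℝ)/2 * (5 * Real.log n) ≤ (s:ℝ)/2 * (c * (p * ((s:ℝ)-1))) :=
              mul_le_mul_of_nonneg_left hlog5 (by linarith)
            have e4 : (s:ℝ) * Real.log n - (s:ℝ)/2 * (5 * Real.log n) ≤ -Real.log n := by
              have h4 : 0 ≤ ((s:ℝ) - 1) * Real.log n :=
                mul_nonneg (by linarith) hlog0
              linarith [h4]
            have hexpo : (s:ℝ) * Real.log n + (l * ((s:ℝ) * m / 2)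
                - p * eh * ((s:ℝ) * ((s:ℝ)-1) / 2)) ≤ -Real.log n := by
              linarith
            calc (n.choose s : ℝ) * bnd2
                ≤ Real.exp ((s:ℝ) * Real.log n + (l * ((s:ℝ) * m / 2)
                  - p * eh * ((s:ℝ) * ((s:ℝ)-1) / 2))) := hstep
              _ ≤ Real.exp (-Real.log n) := Real.exp_le_exp.2 hexpo
              _ = (n:ℝ)⁻¹ := by rw [Real.exp_neg, Real.exp_log hn0]
    calc erMeasure n p (E n)ᶜ
        = (Measure.pi fun _ : Sym2 (Fin n) => bernoulliBool p)
          ((fun f : Sym2 (Fin n) → Bool =>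
            SimpleGraph.fromEdgeSet {e | f e = true}) ⁻¹' (E n)ᶜ) := er_apply _
      _ ≤ (Measure.pi fun _ : Sym2 (Fin n) => bernoulliBool p) Bad := measure_mono hincl
      _ ≤ ENNReal.ofReal ((n:ℝ)⁻¹) := hBadle
  have h0 : Tendsto (fun n => erMeasure n p (E n)ᶜ) atTop (nhds 0) := by
    have hof : Tendsto (fun n : ℕ => ENNReal.ofReal ((n:ℝ)⁻¹)) atTop (nhds 0) := by
      have := ENNReal.tendsto_ofReal (tendsto_inv_atTop_nhds_zero_nat)
      simpa using this
    exact tendsto_of_tendsto_of_tendsto_of_le_of_le' tendsto_const_nhds hof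
      (Eventually.of_forall fun n => zero_le) hbound
  have heq : ∀ n, erMeasure n p (E n) = 1 - erMeasure n p (E n)ᶜ := by
    intro n
    haveI := hprob n
    rw [← prob_compl_eq_one_sub (MeasurableSpace.measurableSet_top), compl_compl]
  refine Tendsto.congr (fun n => (heq n).symm) ?_
  have := ENNReal.Tendsto.sub (tendsto_const_nhds : Tendsto (fun _ : ℕ => (1:ℝ≥0∞)) atTop (nhds 1))
    h0 (Or.inl ENNReal.one_ne_top)
  simpa using this

end Main

/-- Fix `0 < p < 1` and `ε > 0`.  There is `B = B(p,ε) > 0` such that for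
every sequence of positive integers `t(n)` with `t(n) ≥ B·ln n` for all large `n`,
a.a.s. `χ^{t(n)}(G(n,p)) ≥ (1-ε)·n·p/t(n)`. -/
theorem stmt16 (p : ℝ) (hp0 : 0 < p) (hp1 : p < 1) (ε : ℝ) (hε : 0 < ε) :
    ∃ B : ℝ, 0 < B ∧
      ∀ t : ℕ → ℕ, (∀ n, 0 < t n) → (∀ᶠ n : ℕ in atTop, B * Real.log n ≤ (t n : ℝ)) →
        Tendsto (fun n => erMeasure n p
            {G | (1 - ε) * (n : ℝ) * p / (t n : ℝ) ≤ (improperChromaticNumber G (t n) : ℝ)})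
          atTop (nhds 1) := by
  obtain ⟨B, hB0, hmain⟩ := key_lemma p hp0 hp1 (min ε (1/2))
    (lt_min hε (by norm_num)) (min_le_right _ _)
  refine ⟨B, hB0, ?_⟩
  intro t ht hBt
  have h1 := hmain t ht hBt
  haveI : ∀ n, IsProbabilityMeasure (erMeasure n p) := fun n => er_prob hp0.le hp1.le
  refine tendsto_of_tendsto_of_tendsto_of_le_of_le h1 tendsto_const_nhds ?_ ?_
  · intro n
    apply measure_mono
    intro G hG
    simp only [Set.mem_setOf_eq] at hG ⊢
    refine le_trans ?_ hG
    have htn : (0:ℝ) < t n := by exact_mod_cast ht n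
    have hnum : (1-ε)*(n:ℝ)*p ≤ (1 - min ε (1/2))*(n:ℝ)*p := by
      have hle : (1-ε) ≤ (1 - min ε (1/2)) := by
        have := min_le_left ε (1/2)
        linarith
      have hnp : (0:ℝ) ≤ (n:ℝ)*p := by positivity
      have := mul_le_mul_of_nonneg_right hle hnp
      linarith [this]
    exact div_le_div_of_nonneg_right hnum htn.le
  · intro n
    exact prob_le_one
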